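/- Let λ ≠ 1 be an eigenvalue of A_n. Then the vector u ∈ ℂⁿ with u_1 = λ − 1 and u_i = X_i(⌊n/i⌋) for 2 ≤ i ≤ n, where X_i(q) = Σ_{k ≥ 0} v_i(q,k)(λ−1)^{−k}, is nonzero and satisfies A_n u = λ u. -/

import Mathlib

/-- The Dirichlet matrix `D_n` attached to the coefficient sequence `a`. -/
def Dmat (n : ℕ) (a : ℕ → ℂ) : Matrix (Fin n) (Fin n) ℂ :=
  fun i j => if (i.val + 1) ∣ (j.val + 1) then a ((j.val + 1) / (i.val + 1)) else 0

/-- The weight matrix `W_n`: `(i,1)` entry `w i` for `2 ≤ i ≤ n`, other entries `0`. -/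
def Wmat (n : ℕ) (w : ℕ → ℂ) : Matrix (Fin n) (Fin n) ℂ :=
  fun i j => if j.val = 0 ∧ i.val ≠ 0 then w (i.val + 1) else 0

/-- `A_n = W_n + D_n`. -/
def Amat (n : ℕ) (a w : ℕ → ℂ) : Matrix (Fin n) (Fin n) ℂ :=
  Wmat n w + Dmat n a

/-- `dcoef a m k`: the sum of `∏ a ℓᵢ` over `k`-tuples of integers `ℓᵢ ≥ 2`
with product `m`. -/
noncomputable def dcoef (a : ℕ → ℂ) (m k : ℕ) : ℂ :=
  ∑ t ∈ (Fintype.piFinset fun _ : Fin k => Finset.Icc 2 m).filter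
      (fun t => ∏ i, t i = m), ∏ i, a (t i)

/-- `vl a w ℓ m k = ∑_{j=1}^{m} w (j ℓ) * d(j,k)`. -/
noncomputable def vl (a w : ℕ → ℂ) (l m k : ℕ) : ℂ :=
  ∑ j ∈ Finset.Icc 1 m, w (j * l) * dcoef a j k

/-- `X_i(q) = ∑_{k ≥ 0} v_i(q,k) (λ-1)^{-k}`; the sum has finitely many
nonzero terms since `v_i(q,k) = 0` for `k > log₂ q`. -/
noncomputable def Xfun (a w : ℕ → ℂ) (lam : ℂ) (i q : ℕ) : ℂ :=
  ∑' k : ℕ, vl a w i q k * (lam - 1) ^ (-(k : ℤ))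

open Finset

lemma dcoef_zero (a : ℕ → ℂ) (m : ℕ) : dcoef a m 0 = if m = 1 then 1 else 0 := by
  unfold dcoef
  simp [eq_comm]
  split <;> simp

lemma dcoef_eq_zero_of_lt (a : ℕ → ℂ) {m k : ℕ} (h : m < 2 ^ k) : dcoef a m k = 0 := by
  unfold dcoef
  apply Finset.sum_eq_zero
  intro t ht
  exfalso
  simp only [Finset.mem_filter, Fintype.mem_piFinset, Finset.mem_Icc] at ht
  have h2 : (2:ℕ)^k ≤ ∏ i, t i := by
    calc (2:ℕ)^k = ∏ _i : Fin k, 2 := by simp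
    _ ≤ ∏ i, t i := Finset.prod_le_prod' fun i _ => (ht.1 i).1
  omega

lemma dcoef_succ (a : ℕ → ℂ) {m : ℕ} (hm : 1 ≤ m) (k : ℕ) :
    dcoef a m (k + 1) =
      ∑ l ∈ (Finset.Icc 2 m).filter (· ∣ m), a l * dcoef a (m / l) k := by
  unfold dcoef
  simp only [Finset.mul_sum]
  rw [Finset.sum_sigma']
  refine Finset.sum_nbij' (i := fun t => ⟨t 0, fun i => t i.succ⟩)
    (j := fun p => Fin.cons p.fst p.snd) ?_ ?_ ?_ ?_ ?_
  · intro t ht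
    simp only [Finset.mem_filter, Fintype.mem_piFinset, Finset.mem_Icc] at ht
    obtain ⟨h1, h2⟩ := ht
    have hd : t 0 ∣ m := h2 ▸ Finset.dvd_prod_of_mem t (Finset.mem_univ 0)
    have h0pos : 0 < t 0 := lt_of_lt_of_le two_pos (h1 0).1
    have hprod : ∏ i : Fin k, t i.succ = m / t 0 := by
      rw [← h2, Fin.prod_univ_succ, Nat.mul_div_cancel_left _ h0pos]
    have hqpos : 1 ≤ m / t 0 := Nat.one_le_div_iff h0pos |>.mpr (Nat.le_of_dvd hm hd)
    simp only [Finset.mem_sigma, Finset.mem_filter, Fintype.mem_piFinset, Finset.mem_Icc]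
    refine ⟨⟨⟨(h1 0).1, (h1 0).2⟩, hd⟩, fun i => ⟨(h1 i.succ).1, ?_⟩, hprod⟩
    have : t i.succ ∣ m / t 0 := hprod ▸ Finset.dvd_prod_of_mem _ (Finset.mem_univ i)
    exact Nat.le_of_dvd hqpos this
  · intro p hp
    simp only [Finset.mem_sigma, Finset.mem_filter, Fintype.mem_piFinset, Finset.mem_Icc] at hp
    obtain ⟨⟨⟨hl2, hlm⟩, hld⟩, hs, hprod⟩ := hp
    simp only [Finset.mem_filter, Fintype.mem_piFinset, Finset.mem_Icc]
    constructor
    · intro i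
      refine Fin.cases ?_ ?_ i
      · simp [hl2, hlm]
      · intro j
        simp only [Fin.cons_succ]
        exact ⟨(hs j).1, le_trans (hs j).2 (Nat.div_le_self m p.fst)⟩
    · rw [Fin.prod_univ_succ]
      simp only [Fin.cons_zero, Fin.cons_succ]
      rw [hprod, Nat.mul_div_cancel' hld]
  · intro t ht
    exact funext fun i => Fin.cases rfl (fun j => rfl) i
  · intro p hp
    rfl
  · intro t ht
    rw [Fin.prod_univ_succ]

lemma vl_zero (a w : ℕ → ℂ) (l : ℕ) {m : ℕ} (hm : 1 ≤ m) : vl a w l m 0 = w l := by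
  unfold vl
  rw [Finset.sum_eq_single 1]
  · simp [dcoef_zero]
  · intro j hj hne
    simp [dcoef_zero, hne]
  · intro h
    exact absurd (Finset.mem_Icc.mpr ⟨le_refl 1, hm⟩) h

lemma vl_eq_zero (a w : ℕ → ℂ) (l : ℕ) {m k : ℕ} (h : m < 2 ^ k) : vl a w l m k = 0 := by
  unfold vl
  apply Finset.sum_eq_zero
  intro j hj
  rw [dcoef_eq_zero_of_lt a (lt_of_le_of_lt (Finset.mem_Icc.mp hj).2 h), mul_zero]

lemma vl_succ (a w : ℕ → ℂ) (l q k : ℕ) :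
    vl a w l q (k + 1) = ∑ x ∈ Finset.Icc 2 q, a x * vl a w (l * x) (q / x) k := by
  unfold vl
  have lhs_eq : ∑ j ∈ Finset.Icc 1 q, w (j * l) * dcoef a j (k + 1) =
      ∑ j ∈ Finset.Icc 1 q, ∑ x ∈ (Finset.Icc 2 j).filter (· ∣ j),
        w (j * l) * (a x * dcoef a (j / x) k) := by
    refine Finset.sum_congr rfl fun j hj => ?_
    rw [dcoef_succ a (Finset.mem_Icc.mp hj).1, Finset.mul_sum]
  rw [lhs_eq]
  simp only [Finset.mul_sum]
  rw [Finset.sum_sigma', Finset.sum_sigma']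
  refine Finset.sum_nbij' (i := fun p => ⟨p.snd, p.fst / p.snd⟩)
    (j := fun p => ⟨p.fst * p.snd, p.fst⟩) ?_ ?_ ?_ ?_ ?_
  · rintro ⟨j, x⟩ hp
    simp only [Finset.mem_sigma, Finset.mem_filter, Finset.mem_Icc] at hp ⊢
    obtain ⟨⟨hj1, hjq⟩, ⟨hx2, hxj⟩, hxd⟩ := hp
    have hxpos : 0 < x := by omega
    exact ⟨⟨hx2, le_trans hxj hjq⟩,
      (Nat.one_le_div_iff hxpos).mpr hxj, Nat.div_le_div_right hjq⟩
  · rintro ⟨x, j'⟩ hp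
    simp only [Finset.mem_sigma, Finset.mem_filter, Finset.mem_Icc] at hp ⊢
    obtain ⟨⟨hx2, hxq⟩, hj1, hjq⟩ := hp
    have hxpos : 0 < x := by omega
    have hle : x * j' ≤ q := le_trans (Nat.mul_le_mul_left x hjq)
      (by rw [mul_comm]; exact Nat.div_mul_le_self q x)
    refine ⟨⟨by nlinarith, hle⟩, ⟨hx2, Nat.le_mul_of_pos_right x hj1⟩, Dvd.intro j' rfl⟩
  · rintro ⟨j, x⟩ hp
    simp only [Finset.mem_sigma, Finset.mem_filter, Finset.mem_Icc] at hp
    obtain ⟨_, ⟨hx2, _⟩, hxd⟩ := hp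
    exact Sigma.ext (Nat.mul_div_cancel' hxd) (heq_of_eq rfl)
  · rintro ⟨x, j'⟩ hp
    simp only [Finset.mem_sigma, Finset.mem_Icc] at hp
    exact Sigma.ext rfl (heq_of_eq (Nat.mul_div_cancel_left j' ((by omega : (0:ℕ) < x))))
  · rintro ⟨j, x⟩ hp
    simp only [Finset.mem_sigma, Finset.mem_filter, Finset.mem_Icc] at hp
    obtain ⟨_, ⟨hx2, _⟩, hxd⟩ := hp
    have : j / x * (l * x) = j * l := by
      rw [mul_comm l x, ← mul_assoc, Nat.div_mul_cancel hxd]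
    rw [this]; ring

lemma Xfun_eq_sum (a w : ℕ → ℂ) (lam : ℂ) (l : ℕ) {q N : ℕ} (h : q ≤ N) :
    Xfun a w lam l q = ∑ k ∈ Finset.range (N + 1), vl a w l q k * (lam - 1) ^ (-(k : ℤ)) := by
  unfold Xfun
  apply tsum_eq_sum
  intro k hk
  rw [Finset.mem_range, not_lt] at hk
  have hq : q < 2 ^ k := lt_of_lt_of_le (lt_of_le_of_lt h hk) (Nat.lt_two_pow_self (n := k)).le
  rw [vl_eq_zero a w l hq, zero_mul]

lemma Xfun_rec (a w : ℕ → ℂ) {lam : ℂ} (hlam : lam ≠ 1) (m : ℕ) {q : ℕ} (hq : 1 ≤ q) :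
    (lam - 1) * Xfun a w lam m q =
      w m * (lam - 1) + ∑ x ∈ Finset.Icc 2 q, a x * Xfun a w lam (m * x) (q / x) := by
  have hy : lam - 1 ≠ 0 := sub_ne_zero.mpr hlam
  rw [Xfun_eq_sum a w lam m (le_refl q), Finset.mul_sum, Finset.sum_range_succ']
  simp only [Nat.cast_zero, neg_zero, zpow_zero, mul_one, vl_zero a w m hq]
  rw [add_comm, mul_comm (lam - 1) (w m)]
  congr 1
  have step : ∀ k ∈ Finset.range q,
      (lam - 1) * (vl a w m q (k + 1) * (lam - 1) ^ (-((k + 1 : ℕ) : ℤ))) =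
      ∑ x ∈ Finset.Icc 2 q, a x * (vl a w (m * x) (q / x) k * (lam - 1) ^ (-(k : ℤ))) := by
    intro k _
    have hz : (lam - 1) * (lam - 1) ^ (-((k + 1 : ℕ) : ℤ)) = (lam - 1) ^ (-(k : ℤ)) := by
      rw [show (-((k + 1 : ℕ) : ℤ)) = -(k : ℤ) - 1 by push_cast; ring, zpow_sub₀ hy, zpow_one]
      field_simp
    rw [vl_succ, Finset.sum_mul, Finset.mul_sum]
    refine Finset.sum_congr rfl fun x _ => ?_
    rw [← hz]
    ring
  rw [Finset.sum_congr rfl step, Finset.sum_comm]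
  refine Finset.sum_congr rfl fun x hx => ?_
  rw [← Finset.mul_sum]
  congr 1
  have hx2 : 2 ≤ x := (Finset.mem_Icc.mp hx).1
  have hle : q / x ≤ q - 1 := by
    have h1 : q / x ≤ q / 2 := Nat.div_le_div_left hx2 two_pos
    have h2 : q / 2 < q := Nat.div_lt_self hq one_lt_two
    omega
  rw [Xfun_eq_sum a w lam (m * x) hle, show q - 1 + 1 = q from by omega]

lemma aux_exists_eigen (n : ℕ) (hn : 2 ≤ n) (a w : ℕ → ℂ) (ha : a 1 = 1) (hw : w 1 = 1)
    (lam : ℂ) (hlam : lam ≠ 1) (heig : lam ∈ spectrum ℂ (Amat n a w)) :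
    ∃ v : Fin n → ℂ, v ≠ 0 ∧ (Amat n a w).mulVec v = lam • v := by
  have heig' : lam ∈ spectrum ℂ (Matrix.toLinAlgEquiv' (Amat n a w)) := by
    rw [AlgEquiv.spectrum_eq]; exact heig
  have hev := Module.End.hasEigenvalue_iff_mem_spectrum.mpr heig'
  obtain ⟨v, hv⟩ := hev.exists_hasEigenvector
  refine ⟨v, hv.2, ?_⟩
  have := Module.End.mem_eigenspace_iff.mp hv.1
  rwa [Matrix.toLinAlgEquiv'_apply] at this

lemma aux_v0_ne (n : ℕ) (hn : 2 ≤ n) (a w : ℕ → ℂ) (ha : a 1 = 1)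
    (lam : ℂ) (hlam : lam ≠ 1) (v : Fin n → ℂ) (hvne : v ≠ 0)
    (hmv : (Amat n a w).mulVec v = lam • v) : v ⟨0, by omega⟩ ≠ 0 := by
  by_contra h0
  set S := Finset.univ.filter (fun i : Fin n => v i ≠ 0) with hS
  have hSne : S.Nonempty := by
    obtain ⟨i, hi⟩ := Function.ne_iff.mp hvne
    exact ⟨i, by simp only [hS, Finset.mem_filter, Finset.mem_univ, true_and]; simpa using hi⟩
  set i := S.max' hSne with hidef
  have hvi : v i ≠ 0 := by
    have := S.max'_mem hSne
    simp [hS] at this; exact this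
  have hgt : ∀ j, i < j → v j = 0 := by
    intro j hj
    by_contra h
    exact absurd (S.le_max' j (by simp [hS, h])) (not_le.mpr hj)
  have hrow := congrFun hmv i
  rw [Matrix.mulVec, dotProduct] at hrow
  have hsum : ∑ j, Amat n a w i j * v j = v i := by
    rw [Finset.sum_eq_single i]
    · simp [Amat, Wmat, Dmat, Matrix.add_apply, ha]
    · intro j _ hne
      rcases lt_or_gt_of_ne hne with hlt | hgtij
      · -- j < i
        have hjv : Amat n a w i j = if j.val = 0 then w (i.val + 1) else 0 := by
          have hnd : ¬ (i.val + 1) ∣ (j.val + 1) := by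
            intro hd
            have := Nat.le_of_dvd (by omega) hd
            have : j.val < i.val := hlt
            omega
          have hji : (j : ℕ) < (i : ℕ) := hlt
          simp [Amat, Wmat, Dmat, Matrix.add_apply, hnd, show (i : ℕ) ≠ 0 from by omega]
        rw [hjv]
        by_cases hj0 : j.val = 0
        · have : j = ⟨0, by omega⟩ := Fin.ext hj0
          rw [this] at *
          simp [hj0, h0]
        · simp [hj0]
      · rw [hgt j hgtij, mul_zero]
    · intro h; exact absurd (Finset.mem_univ i) h
  rw [hsum, Pi.smul_apply, smul_eq_mul] at hrow
  have h1 : (lam - 1) * v i = 0 := by linear_combination -hrow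
  rcases mul_eq_zero.mp h1 with h | h
  · exact hlam (sub_eq_zero.mp h)
  · exact hvi h

lemma aux_row (n : ℕ) (hn : 2 ≤ n) (a w : ℕ → ℂ) (ha : a 1 = 1)
    (lam : ℂ) (z : Fin n → ℂ)
    (hmv : (Amat n a w).mulVec z = lam • z) (i : Fin n) (hi : i.val ≠ 0) :
    (lam - 1) * z i = w (i.val + 1) * z ⟨0, by omega⟩ +
      ∑ j ∈ Finset.univ.filter (fun j : Fin n => i < j ∧ (i.val + 1) ∣ (j.val + 1)),
        a ((j.val + 1) / (i.val + 1)) * z j := by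
  have hrow := congrFun hmv i
  rw [Matrix.mulVec, dotProduct] at hrow
  have hsplit : ∑ j, Amat n a w i j * z j =
      w (i.val + 1) * z ⟨0, by omega⟩ + (z i +
        ∑ j ∈ Finset.univ.filter (fun j : Fin n => i < j ∧ (i.val + 1) ∣ (j.val + 1)),
          a ((j.val + 1) / (i.val + 1)) * z j) := by
    have hA : ∀ j, Amat n a w i j * z j = Wmat n w i j * z j + Dmat n a i j * z j := by
      intro j; rw [Amat, Matrix.add_apply, add_mul]
    rw [Finset.sum_congr rfl fun j _ => hA j, Finset.sum_add_distrib]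
    congr 1
    · -- W part
      rw [Finset.sum_eq_single (⟨0, by omega⟩ : Fin n)]
      · simp [Wmat, hi]
      · intro j _ hne
        have : j.val ≠ 0 := fun h => hne (Fin.ext h)
        simp [Wmat, this]
      · intro h; exact absurd (Finset.mem_univ _) h
    · -- D part
      have h1 : ∑ j, Dmat n a i j * z j =
          ∑ j ∈ Finset.univ.filter (fun j : Fin n => (i.val + 1) ∣ (j.val + 1)),
            a ((j.val + 1) / (i.val + 1)) * z j := by
        rw [Finset.sum_filter]
        refine Finset.sum_congr rfl fun j _ => ?_
        rw [Dmat]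
        split <;> simp
      rw [h1]
      have h2 : Finset.univ.filter (fun j : Fin n => (i.val + 1) ∣ (j.val + 1)) =
          insert i (Finset.univ.filter (fun j : Fin n => i < j ∧ (i.val + 1) ∣ (j.val + 1))) := by
        ext j
        simp only [Finset.mem_filter, Finset.mem_univ, true_and, Finset.mem_insert]
        constructor
        · intro hd
          rcases lt_or_ge i j with h | h
          · exact Or.inr ⟨h, hd⟩
          · left
            have := Nat.le_of_dvd (by omega) hd
            have hji : j.val ≤ i.val := h
            exact Fin.ext (by omega)
        · rintro (rfl | ⟨_, hd⟩)
          · exact dvd_refl _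
          · exact hd
      rw [h2, Finset.sum_insert (by simp)]
      rw [Nat.div_self (by omega), ha, one_mul]
  rw [hsplit] at hrow
  rw [Pi.smul_apply, smul_eq_mul] at hrow
  linear_combination -hrow

lemma aux_reindex (n : ℕ) (hn : 2 ≤ n) (a : ℕ → ℂ) (F : ℕ → ℂ) (i : Fin n) (hi : i.val ≠ 0) :
    ∑ j ∈ Finset.univ.filter (fun j : Fin n => i < j ∧ (i.val + 1) ∣ (j.val + 1)),
        a ((j.val + 1) / (i.val + 1)) * F (j.val + 1) =
      ∑ x ∈ Finset.Icc 2 (n / (i.val + 1)), a x * F ((i.val + 1) * x) := by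
  set m := i.val + 1 with hm
  have hm2 : 2 ≤ m := by omega
  have hmn : m ≤ n := i.isLt
  refine Finset.sum_nbij' (i := fun j => (j.val + 1) / m)
    (j := fun x => if h : m * x - 1 < n then (⟨m * x - 1, h⟩ : Fin n) else i) ?_ ?_ ?_ ?_ ?_
  · intro j hj
    simp only [Finset.mem_filter, Finset.mem_univ, true_and] at hj
    obtain ⟨hij, hd⟩ := hj
    obtain ⟨x, hx⟩ := hd
    have hij' : i.val < j.val := hij
    have hjn : j.val < n := j.isLt
    show (j.val + 1) / m ∈ Finset.Icc 2 (n / m)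
    rw [hx, Nat.mul_div_cancel_left x (by omega)]
    rw [Finset.mem_Icc]
    constructor
    · nlinarith
    · rw [Nat.le_div_iff_mul_le (by omega : 0 < m)]
      have : x * m = m * x := mul_comm x m
      omega
  · intro x hx
    rw [Finset.mem_Icc] at hx
    obtain ⟨hx2, hxq⟩ := hx
    have hmxn : m * x ≤ n := by
      rw [Nat.le_div_iff_mul_le (by omega : 0 < m)] at hxq
      have : x * m = m * x := mul_comm x m
      omega
    have h2m : 2 * m ≤ m * x := by nlinarith
    beta_reduce
    rw [dif_pos (by omega : m * x - 1 < n)]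
    simp only [Finset.mem_filter, Finset.mem_univ, true_and, Fin.lt_def]
    constructor
    · show i.val < m * x - 1
      omega
    · have : m * x - 1 + 1 = m * x := by omega
      rw [this]
      exact Dvd.intro x rfl
  · intro j hj
    simp only [Finset.mem_filter, Finset.mem_univ, true_and] at hj
    obtain ⟨hij, hd⟩ := hj
    have heq := Nat.mul_div_cancel' hd
    have hb : m * ((j.val + 1) / m) - 1 < n := by have := j.isLt; omega
    show (if h : _ then _ else _) = j
    beta_reduce
    rw [dif_pos hb]
    apply Fin.ext
    show m * ((j.val + 1) / m) - 1 = j.val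
    omega
  · intro x hx
    rw [Finset.mem_Icc] at hx
    obtain ⟨hx2, hxq⟩ := hx
    have hmxn : m * x ≤ n := by
      rw [Nat.le_div_iff_mul_le (by omega : 0 < m)] at hxq
      have : x * m = m * x := mul_comm x m
      omega
    have h2m : 2 * m ≤ m * x := by nlinarith
    have h1 : m * x - 1 + 1 = m * x := by omega
    beta_reduce
    rw [dif_pos (by omega : m * x - 1 < n)]
    show (m * x - 1 + 1) / m = x
    rw [h1, Nat.mul_div_cancel_left x (by omega : 0 < m)]
  · intro j hj
    simp only [Finset.mem_filter, Finset.mem_univ, true_and] at hj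
    obtain ⟨hij, hd⟩ := hj
    rw [Nat.mul_div_cancel' hd]
/-- If `λ ≠ 1` is an eigenvalue of `A_n`, then the vector `u` with `u₁ = λ - 1` and
`uᵢ = Xᵢ(⌊n/i⌋)` for `2 ≤ i ≤ n` is nonzero and satisfies `A_n u = λ u`. -/
theorem eigenvector_Amat (n : ℕ) (hn : 2 ≤ n) (a w : ℕ → ℂ) (ha : a 1 = 1) (hw : w 1 = 1)
    (lam : ℂ) (hlam : lam ≠ 1) (heig : lam ∈ spectrum ℂ (Amat n a w)) :
    (fun i : Fin n => if i.val = 0 then lam - 1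
        else Xfun a w lam (i.val + 1) (n / (i.val + 1))) ≠ 0 ∧
    (Amat n a w).mulVec (fun i : Fin n => if i.val = 0 then lam - 1
        else Xfun a w lam (i.val + 1) (n / (i.val + 1))) =
      lam • (fun i : Fin n => if i.val = 0 then lam - 1
        else Xfun a w lam (i.val + 1) (n / (i.val + 1))) := by
  have hy : lam - 1 ≠ 0 := sub_ne_zero.mpr hlam
  set u : Fin n → ℂ := fun i : Fin n => if i.val = 0 then lam - 1
        else Xfun a w lam (i.val + 1) (n / (i.val + 1)) with hu
  obtain ⟨v, hvne, hmv⟩ := aux_exists_eigen n hn a w ha hw lam hlam heig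
  have hv0 : v ⟨0, by omega⟩ ≠ 0 := aux_v0_ne n hn a w ha lam hlam v hvne hmv
  set c : ℂ := (lam - 1) * (v ⟨0, by omega⟩)⁻¹ with hc
  set z : Fin n → ℂ := c • v with hz
  have hmz : (Amat n a w).mulVec z = lam • z := by
    rw [hz, Matrix.mulVec_smul, hmv, smul_comm]
  have hz0 : z ⟨0, by omega⟩ = lam - 1 := by
    rw [hz, Pi.smul_apply, smul_eq_mul, hc, mul_assoc,
      inv_mul_cancel₀ hv0, mul_one]
  have key : ∀ d : ℕ, ∀ i : Fin n, n ≤ i.val + d → i.val ≠ 0 →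
      z i = Xfun a w lam (i.val + 1) (n / (i.val + 1)) := by
    intro d
    induction d with
    | zero =>
      intro i hle _
      exact absurd hle (by have := i.isLt; omega)
    | succ d ih =>
      intro i hle hi0
      have hrow := aux_row n hn a w ha lam z hmz i hi0
      rw [hz0] at hrow
      have hsum : ∑ j ∈ Finset.univ.filter
            (fun j : Fin n => i < j ∧ (i.val + 1) ∣ (j.val + 1)),
            a ((j.val + 1) / (i.val + 1)) * z j
          = ∑ j ∈ Finset.univ.filter
            (fun j : Fin n => i < j ∧ (i.val + 1) ∣ (j.val + 1)),
            a ((j.val + 1) / (i.val + 1)) *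
              Xfun a w lam (j.val + 1) (n / (j.val + 1)) := by
        refine Finset.sum_congr rfl fun j hj => ?_
        simp only [Finset.mem_filter, Finset.mem_univ, true_and] at hj
        have h1 : i.val < j.val := hj.1
        rw [ih j (by omega) (by omega)]
      rw [hsum,
        aux_reindex n hn a (fun t => Xfun a w lam t (n / t)) i hi0] at hrow
      have hq1 : 1 ≤ n / (i.val + 1) :=
        (Nat.one_le_div_iff (by omega)).mpr i.isLt
      have hrec := Xfun_rec a w hlam (i.val + 1) hq1
      have hconv : ∀ x ∈ Finset.Icc 2 (n / (i.val + 1)),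
          a x * Xfun a w lam ((i.val + 1) * x) (n / (i.val + 1) / x)
          = a x * Xfun a w lam ((i.val + 1) * x) (n / ((i.val + 1) * x)) := by
        intro x _
        rw [Nat.div_div_eq_div_mul]
      rw [Finset.sum_congr rfl hconv] at hrec
      exact mul_left_cancel₀ hy (hrow.trans hrec.symm)
  have huz : u = z := by
    funext i
    by_cases h0 : i.val = 0
    · have hieq : i = ⟨0, by omega⟩ := Fin.ext h0
      rw [hu, hieq]
      simp only [if_pos rfl]
      exact hz0.symm
    · rw [hu]
      simp only [if_neg h0]
      exact (key n i (by omega) h0).symm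
  constructor
  · rw [huz]
    intro h
    have := congrFun h ⟨0, by omega⟩
    rw [hz0] at this
    exact hy this
  · rw [huz, hmz]
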